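/- Let r ∈ ℚ_{>1} \ ℕ (so n(r) > d(r) > 1 and S_r is atomic). Then the set of elasticities { ρ(x) : x ∈ S_r, x ≠ 0 } is dense in the real interval [1, ∞). -/

import Mathlib

open Finsupp
open scoped ENNReal

/-- The Puiseux monoid (rational cyclic semiring) `S_r`, the additive submonoid of `ℚ`
generated by the nonnegative powers of `r`. -/
def S (r : ℚ) : AddSubmonoid ℚ := AddSubmonoid.closure {x : ℚ | ∃ n : ℕ, x = r ^ n}

/-- A factorization of `x` over the powers of `r`: a finitely supported choice of
coefficients `α i` with `∑ α i * r ^ i = x`. -/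
def IsFactorization (r x : ℚ) (α : ℕ →₀ ℕ) : Prop :=
  (α.sum fun i c => (c : ℚ) * r ^ i) = x

/-- The length of a factorization. -/
def flen (α : ℕ →₀ ℕ) : ℕ := α.sum fun _ c => c

/-- The set of lengths of factorizations of `x` over the powers of `r`. -/
def lengthSet (r x : ℚ) : Set ℕ :=
  {t | ∃ α : ℕ →₀ ℕ, IsFactorization r x α ∧ flen α = t}

/-- An atom of `S_r`: a nonzero element that is not the sum of two nonzero elements. -/
def IsAtomS (r a : ℚ) : Prop :=
  a ∈ S r ∧ a ≠ 0 ∧ ¬ ∃ y z : ℚ, y ∈ S r ∧ z ∈ S r ∧ y ≠ 0 ∧ z ≠ 0 ∧ a = y + z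

/-- The set of lengths of `x` as sums of atoms of `S_r`. -/
def atomLengthSet (r x : ℚ) : Set ℕ :=
  {t | ∃ f : Fin t → ℚ, (∀ i, IsAtomS r (f i)) ∧ ∑ i, f i = x}

open Classical in
/-- The elasticity of `x` in `S_r` (as an extended nonnegative real). -/
noncomputable def elast (r x : ℚ) : ℝ≥0∞ :=
  if x = 0 then 1
  else if BddAbove (atomLengthSet r x) then
    (↑(sSup (atomLengthSet r x)) : ℝ≥0∞) / (↑(sInf (atomLengthSet r x)) : ℝ≥0∞)
  else ⊤

/-- The elasticity of the monoid `S_r`. -/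
noncomputable def elastM (r : ℚ) : ℝ≥0∞ := ⨆ x ∈ S r, elast r x

-- value as a plain Finset sum
lemma fsum_eq (r : ℚ) (α : ℕ →₀ ℕ) :
    (α.sum fun i c => (c : ℚ) * r ^ i) = ∑ i ∈ α.support, (α i : ℚ) * r ^ i := rfl

lemma flen_eq (α : ℕ →₀ ℕ) : flen α = ∑ i ∈ α.support, α i := rfl

lemma fact_add (r x y : ℚ) (α β : ℕ →₀ ℕ) (hα : IsFactorization r x α)
    (hβ : IsFactorization r y β) : IsFactorization r (x + y) (α + β) := by
  unfold IsFactorization at *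
  rw [Finsupp.sum_add_index' (by simp) (by push_cast; intros; ring), hα, hβ]

lemma flen_add (α β : ℕ →₀ ℕ) : flen (α + β) = flen α + flen β := by
  unfold flen
  rw [Finsupp.sum_add_index' (by simp) (by intros; rfl)]

lemma fact_single (r : ℚ) (i c : ℕ) :
    IsFactorization r ((c : ℚ) * r ^ i) (Finsupp.single i c) := by
  unfold IsFactorization
  rw [Finsupp.sum_single_index (by simp)]

lemma flen_single (i c : ℕ) : flen (Finsupp.single i c) = c := by
  unfold flen; rw [Finsupp.sum_single_index rfl]

lemma val_nonneg (r : ℚ) (hr : 0 < r) (α : ℕ →₀ ℕ) :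
    0 ≤ α.sum fun i c => (c : ℚ) * r ^ i := by
  refine Finset.sum_nonneg fun i _ => ?_
  positivity

lemma term_le_val (r : ℚ) (hr : 0 < r) (α : ℕ →₀ ℕ) (i : ℕ) :
    (α i : ℚ) * r ^ i ≤ α.sum fun i c => (c : ℚ) * r ^ i := by
  by_cases h : i ∈ α.support
  · exact Finset.single_le_sum (f := fun i => (α i : ℚ) * r ^ i)
      (fun j _ => by positivity) h
  · simp only [Finsupp.notMem_support_iff] at h
    rw [h]
    simpa using val_nonneg r hr α

lemma flen_le_val (r : ℚ) (hr : 1 ≤ r) (α : ℕ →₀ ℕ) :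
    (flen α : ℚ) ≤ α.sum fun i c => (c : ℚ) * r ^ i := by
  rw [flen_eq, fsum_eq, Nat.cast_sum]
  refine Finset.sum_le_sum fun i _ => ?_
  nth_rewrite 1 [← mul_one (α i : ℚ)]
  exact mul_le_mul_of_nonneg_left (one_le_pow₀ hr) (by positivity)

lemma val_eq_zero (r : ℚ) (hr : 0 < r) (α : ℕ →₀ ℕ)
    (h : (α.sum fun i c => (c : ℚ) * r ^ i) = 0) : α = 0 := by
  ext i
  by_contra hi
  have hmem : i ∈ α.support := Finsupp.mem_support_iff.2 (by simpa using hi)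
  have h1 : (0:ℚ) < (α i : ℚ) * r ^ i := by
    have : 0 < α i := Nat.pos_of_ne_zero (by simpa using hi)
    positivity
  have := term_le_val r hr α i
  rw [h] at this
  linarith

lemma flen_zero_iff (α : ℕ →₀ ℕ) : flen α = 0 ↔ α = 0 := by
  constructor
  · intro h
    ext i
    simp only [Finsupp.coe_zero, Pi.zero_apply]
    by_contra hi
    have hmem : i ∈ α.support := Finsupp.mem_support_iff.2 hi
    have h2 : α i ≤ flen α := by
      rw [flen_eq]
      exact Finset.single_le_sum (f := fun i => α i) (fun j _ => Nat.zero_le _) hmem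
    have hpos : 0 < α i := Nat.pos_of_ne_zero hi
    omega
  · rintro rfl; rfl

lemma mem_S_iff (r : ℚ) (x : ℚ) : x ∈ S r ↔ ∃ α, IsFactorization r x α := by
  constructor
  · intro hx
    refine AddSubmonoid.closure_induction
      (motive := fun y _ => ∃ α, IsFactorization r y α) ?_ ?_ ?_ hx
    · rintro y ⟨n, rfl⟩
      exact ⟨Finsupp.single n 1, by simpa using fact_single r n 1⟩
    · exact ⟨0, by simp [IsFactorization]⟩
    · rintro y z - - ⟨α, hα⟩ ⟨β, hβ⟩
      exact ⟨α + β, fact_add r y z α β hα hβ⟩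
  · rintro ⟨α, hα⟩
    have hmem : (∑ i ∈ α.support, (α i : ℚ) * r ^ i) ∈ S r := by
      refine AddSubmonoid.sum_mem _ fun i _ => ?_
      rw [show (α i : ℚ) * r ^ i = α i • (r ^ i : ℚ) by simp [nsmul_eq_mul]]
      have hgen : (r ^ i : ℚ) ∈ S r :=
        AddSubmonoid.subset_closure (s := {x : ℚ | ∃ n : ℕ, x = r ^ n}) ⟨i, rfl⟩
      exact AddSubmonoid.nsmul_mem _ hgen (α i)
    rwa [← fsum_eq, hα] at hmem


section
variable (r : ℚ)

lemma hr0 (h1 : 1 < r) : (0:ℚ) < r := lt_trans one_pos h1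

lemma num_pos (h1 : 1 < r) : 0 < r.num := Rat.num_pos.2 (hr0 r h1)

lemma natAbs_cast (h1 : 1 < r) : ((r.num.natAbs : ℤ) : ℚ) = (r.num : ℚ) := by
  rw [Int.natAbs_of_nonneg (le_of_lt (num_pos r h1))]

lemma dr_eq (h1 : 1 < r) : (r.den : ℚ) * r = (r.num.natAbs : ℚ) := by
  have h := Rat.mul_den_eq_num r
  rw [mul_comm, h, Nat.cast_natAbs,
    abs_of_nonneg (le_of_lt (num_pos r h1))]

lemma den_lt_num (h1 : 1 < r) : r.den < r.num.natAbs := by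
  have h := dr_eq r h1
  have : (r.den : ℚ) * 1 < (r.den : ℚ) * r :=
    mul_lt_mul_of_pos_left h1 (by exact_mod_cast r.pos)
  rw [mul_one, h] at this
  exact_mod_cast this

lemma pow_eq (h1 : 1 < r) (i : ℕ) : (r.den : ℚ) ^ i * r ^ i = (r.num.natAbs : ℚ) ^ i := by
  rw [← mul_pow, dr_eq r h1]

/-- Integer (ℕ) form of a factorization identity at level `J`. -/
lemma int_eq (h1 : 1 < r) (α : ℕ →₀ ℕ) (J : ℕ) (hsupp : ∀ i ∈ α.support, i ≤ J) :
    ((∑ i ∈ α.support, α i * r.num.natAbs ^ i * r.den ^ (J - i) : ℕ) : ℚ)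
      = (α.sum fun i c => (c : ℚ) * r ^ i) * (r.den : ℚ) ^ J := by
  rw [Finsupp.sum, Finset.sum_mul]
  push_cast
  refine Finset.sum_congr rfl fun i hi => ?_
  have hiJ : i ≤ J := hsupp i hi
  have : (r.den : ℚ) ^ J = (r.den : ℚ) ^ (J - i) * ((r.den : ℚ) ^ i) := by
    rw [← pow_add]
    congr 1
    omega
  rw [this]
  have hp := pow_eq r h1 i
  rw [← hp]
  ring

/-- The forcing lemma: under the stated conditions every factorization of `x`
uses the power `r ^ K` at least once. -/
lemma force (h1 : 1 < r) (hd : r.den ≠ 1) (K : ℕ) (hK : 1 ≤ K) (N : ℕ) (hN : ¬ (r.den ∣ N))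
    (x : ℚ) (hx : x * (r.den : ℚ) ^ K = N)
    (hbig : x < ((r.den : ℚ) + 1) * r ^ K)
    (α : ℕ →₀ ℕ) (hα : IsFactorization r x α) : 1 ≤ α K := by
  set n := r.num.natAbs with hn
  set d := r.den with hdd
  have hd2 : 2 ≤ d := by
    have := r.pos
    omega
  have hcop : n.Coprime d := r.reduced
  have hr1 : (1:ℚ) ≤ r := le_of_lt h1
  have hrpos : (0:ℚ) < r := hr0 r h1
  -- step (i): support is bounded by K
  have hsupp : ∀ j ∈ α.support, j ≤ K := by
    by_contra hcon
    push_neg at hcon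
    obtain ⟨j, hj, hjK⟩ := hcon
    have hne : α.support.Nonempty := ⟨j, hj⟩
    set J := α.support.max' hne with hJ
    have hJmem : J ∈ α.support := α.support.max'_mem hne
    have hsuppJ : ∀ i ∈ α.support, i ≤ J := fun i hi => α.support.le_max' i hi
    have hJK : K < J := lt_of_lt_of_le hjK (α.support.le_max' j hj)
    -- integer equation at level J
    have heq : (∑ i ∈ α.support, α i * n ^ i * d ^ (J - i)) = N * d ^ (J - K) := by
      have h2 := int_eq r h1 α J hsuppJ
      rw [hα] at h2
      have h3 : x * (d:ℚ)^J = (N:ℚ) * (d:ℚ)^(J-K) := by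
        have : (d:ℚ)^J = (d:ℚ)^K * (d:ℚ)^(J-K) := by
          rw [← pow_add]; congr 1; omega
        rw [this, ← mul_assoc, hx]
      rw [h3] at h2
      exact_mod_cast h2
    -- d divides α J * n ^ J
    have hdvd : d ∣ α J * n ^ J := by
      have hdvd1 : d ∣ ∑ i ∈ α.support, α i * n ^ i * d ^ (J - i) := by
        rw [heq]
        exact Dvd.dvd.mul_left (dvd_pow_self d (by omega)) N
      have hsplit : ∑ i ∈ α.support, α i * n ^ i * d ^ (J - i)
          = α J * n ^ J * d ^ (J - J) + ∑ i ∈ α.support.erase J, α i * n ^ i * d ^ (J - i) := by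
        exact (Finset.add_sum_erase _ _ hJmem).symm
      have hdvd2 : d ∣ ∑ i ∈ α.support.erase J, α i * n ^ i * d ^ (J - i) := by
        refine Finset.dvd_sum fun i hi => ?_
        have hiJ : i ≤ J := hsuppJ i (Finset.mem_of_mem_erase hi)
        have hine : i ≠ J := Finset.ne_of_mem_erase hi
        exact Dvd.dvd.mul_left (dvd_pow_self d (by omega)) _
      have := hsplit ▸ hdvd1
      simpa [Nat.sub_self] using (Nat.dvd_sub this hdvd2)
    have hdvdJ : d ∣ α J := (Nat.Coprime.dvd_of_dvd_mul_right
      ((hcop.symm).pow_right J) hdvd)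
    have hαJ : d ≤ α J := Nat.le_of_dvd (Nat.pos_of_ne_zero
      (Finsupp.mem_support_iff.1 hJmem)) hdvdJ
    -- value bound contradiction
    have hterm : (α J : ℚ) * r ^ J ≤ x := by
      rw [← hα]
      exact term_le_val r hrpos α J
    have hd1 : ((d:ℚ) + 1) * r ^ K ≤ (α J : ℚ) * r ^ J := by
      have h5 : ((d:ℚ) + 1) ≤ (n:ℚ) := by
        have := den_lt_num r h1
        push_cast
        exact_mod_cast (by omega : d + 1 ≤ n)
      have h6 : (n:ℚ) * r ^ K ≤ (n:ℚ) * r ^ (J - 1) := by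
        refine mul_le_mul_of_nonneg_left (pow_le_pow_right₀ hr1 (by omega)) (by positivity)
      have h7 : (n:ℚ) * r ^ (J - 1) = (d:ℚ) * r ^ J := by
        have hJ1 : J - 1 + 1 = J := by omega
        rw [← dr_eq r h1, mul_assoc, ← pow_succ', hJ1]
      have h8 : (d:ℚ) * r ^ J ≤ (α J : ℚ) * r ^ J := by
        refine mul_le_mul_of_nonneg_right ?_ (by positivity)
        exact_mod_cast hαJ
      calc ((d:ℚ)+1) * r ^ K ≤ (n:ℚ) * r ^ K :=
            mul_le_mul_of_nonneg_right h5 (by positivity)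
        _ ≤ (n:ℚ) * r ^ (J-1) := h6
        _ = (d:ℚ) * r ^ J := h7
        _ ≤ (α J : ℚ) * r ^ J := h8
    linarith
  -- step (ii): α K ≥ 1
  by_contra hcon
  push_neg at hcon
  have hK0 : α K = 0 := by omega
  have heq : (∑ i ∈ α.support, α i * n ^ i * d ^ (K - i)) = N := by
    have h2 := int_eq r h1 α K hsupp
    rw [hα, hx] at h2
    exact_mod_cast h2
  apply hN
  rw [← heq]
  refine Finset.dvd_sum fun i hi => ?_
  have hiK : i ≤ K := hsupp i hi
  have hine : i ≠ K := by
    intro h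
    exact (Finsupp.mem_support_iff.1 hi) (h ▸ hK0)
  exact Dvd.dvd.mul_left (dvd_pow_self d (by omega)) _
end

section
variable (r : ℚ)

lemma fact_sub (i : ℕ) (x : ℚ) (α : ℕ →₀ ℕ) (hle : 1 ≤ α i)
    (hα : IsFactorization r x α) :
    IsFactorization r (x - r ^ i) (α - Finsupp.single i 1) ∧
      flen α = flen (α - Finsupp.single i 1) + 1 := by
  have hle' : Finsupp.single i 1 ≤ α := by
    rw [Finsupp.single_le_iff]; exact hle
  have heq : (α - Finsupp.single i 1) + Finsupp.single i 1 = α :=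
    tsub_add_cancel_of_le hle'
  have hval : (α.sum fun i c => (c:ℚ) * r ^ i)
      = ((α - Finsupp.single i 1).sum fun i c => (c:ℚ) * r ^ i) + r ^ i := by
    conv_lhs => rw [← heq]
    rw [Finsupp.sum_add_index' (by simp) (by push_cast; intros; ring)]
    rw [Finsupp.sum_single_index (by simp)]
    push_cast; ring
  have hlen : flen α = flen (α - Finsupp.single i 1) + 1 := by
    conv_lhs => rw [← heq]
    rw [flen_add, flen_single]
  refine ⟨?_, hlen⟩
  unfold IsFactorization at *
  rw [hα] at hval
  linarith [hval]

lemma S_nonneg (h1 : 1 < r) (x : ℚ) (hx : x ∈ S r) : 0 ≤ x := by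
  obtain ⟨α, hα⟩ := (mem_S_iff r x).1 hx
  rw [← hα]
  exact val_nonneg r (hr0 r h1) α

lemma fact_pow_flen (h1 : 1 < r) (hd : r.den ≠ 1) (i : ℕ) (α : ℕ →₀ ℕ)
    (hα : IsFactorization r (r ^ i) α) : flen α = 1 := by
  have hrpos := hr0 r h1
  rcases Nat.eq_zero_or_pos i with hi | hi
  · subst hi
    have h2 : (flen α : ℚ) ≤ 1 := by
      have := flen_le_val r (le_of_lt h1) α
      rw [hα] at this
      simpa using this
    have h3 : flen α ≠ 0 := by
      intro h
      have := (flen_zero_iff α).1 h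
      subst this
      simp [IsFactorization] at hα
    have : flen α ≤ 1 := by exact_mod_cast h2
    omega
  · have hforce : 1 ≤ α i := by
      refine force r h1 hd i hi (r.num.natAbs ^ i) ?_ (r ^ i) ?_ ?_ α hα
      · intro hdvd
        have hcop : (r.den).Coprime (r.num.natAbs ^ i) :=
          (r.reduced.symm).pow_right i
        exact hd (Nat.Coprime.eq_one_of_dvd hcop hdvd)
      · rw [mul_comm]
        push_cast [pow_eq r h1 i]
        norm_num
      · have : (0:ℚ) < r ^ i := by positivity
        have hd0 : (0:ℚ) < (r.den : ℚ) := by exact_mod_cast r.pos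
        nlinarith
    obtain ⟨hβ, hlen⟩ := fact_sub r i (r ^ i) α hforce hα
    simp only [sub_self] at hβ
    have hβ0 : α - Finsupp.single i 1 = 0 := val_eq_zero r hrpos _ hβ
    rw [hlen, hβ0]
    rfl
end

section
variable (r : ℚ)

lemma pow_mem_S (i : ℕ) : (r ^ i : ℚ) ∈ S r :=
  AddSubmonoid.subset_closure (s := {x : ℚ | ∃ n : ℕ, x = r ^ n}) ⟨i, rfl⟩

lemma atom_iff (h1 : 1 < r) (hd : r.den ≠ 1) (a : ℚ) :
    IsAtomS r a ↔ ∃ i : ℕ, a = r ^ i := by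
  have hrpos := hr0 r h1
  constructor
  · rintro ⟨haS, ha0, hnot⟩
    obtain ⟨α, hα⟩ := (mem_S_iff r a).1 haS
    have hflen : flen α ≠ 0 := by
      intro h
      have := (flen_zero_iff α).1 h
      subst this
      simp [IsFactorization] at hα
      exact ha0 hα.symm
    -- pick i in the support
    have hne : α.support.Nonempty := by
      rw [Finset.nonempty_iff_ne_empty]
      intro h
      exact hflen (by rw [flen_eq, h]; rfl)
    obtain ⟨i, hi⟩ := hne
    have hi1 : 1 ≤ α i := Nat.pos_of_ne_zero (Finsupp.mem_support_iff.1 hi)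
    obtain ⟨hβ, hlen⟩ := fact_sub r i a α hi1 hα
    by_cases hflen1 : flen α = 1
    · -- then α = single i 1 and a = r ^ i
      have hβ0 : flen (α - Finsupp.single i 1) = 0 := by omega
      have hβ0' : α - Finsupp.single i 1 = 0 := (flen_zero_iff _).1 hβ0
      rw [hβ0'] at hβ
      simp [IsFactorization] at hβ
      exact ⟨i, by linarith⟩
    · -- length ≥ 2 : contradiction with atomicity
      exfalso
      apply hnot
      refine ⟨r ^ i, a - r ^ i, pow_mem_S r i, ?_, by positivity, ?_, by ring⟩
      · exact (mem_S_iff r _).2 ⟨_, hβ⟩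
      · -- a - r ^ i ≠ 0 since its factorization has positive length
        intro h
        rw [h] at hβ
        have := val_eq_zero r hrpos _ hβ
        have : flen (α - Finsupp.single i 1) = 0 := by rw [this]; rfl
        omega
  · rintro ⟨i, rfl⟩
    refine ⟨pow_mem_S r i, by positivity, ?_⟩
    rintro ⟨y, z, hyS, hzS, hy0, hz0, heq⟩
    obtain ⟨β, hβ⟩ := (mem_S_iff r y).1 hyS
    obtain ⟨γ, hγ⟩ := (mem_S_iff r z).1 hzS
    have hfact : IsFactorization r (r ^ i) (β + γ) := by
      rw [heq]; exact fact_add r y z β γ hβ hγ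
    have h1' := fact_pow_flen r h1 hd i (β + γ) hfact
    rw [flen_add] at h1'
    have hβ0 : flen β ≠ 0 := by
      intro h
      rw [(flen_zero_iff β).1 h] at hβ
      simp [IsFactorization] at hβ
      exact hy0 hβ.symm
    have hγ0 : flen γ ≠ 0 := by
      intro h
      rw [(flen_zero_iff γ).1 h] at hγ
      simp [IsFactorization] at hγ
      exact hz0 hγ.symm
    omega

lemma atoms_to_fact (h1 : 1 < r) (hd : r.den ≠ 1) :
    ∀ (t : ℕ) (f : Fin t → ℚ), (∀ i, IsAtomS r (f i)) →
      ∃ α, IsFactorization r (∑ i, f i) α ∧ flen α = t := by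
  intro t
  induction t with
  | zero =>
      intro f _
      refine ⟨0, ?_, rfl⟩
      simp [IsFactorization]
  | succ t ih =>
      intro f hf
      obtain ⟨α, hα, hlen⟩ := ih (fun j => f j.succ) (fun j => hf j.succ)
      obtain ⟨i, hi⟩ := (atom_iff r h1 hd (f 0)).1 (hf 0)
      refine ⟨Finsupp.single i 1 + α, ?_, ?_⟩
      · have h0 : IsFactorization r (r ^ i) (Finsupp.single i 1) := by
          simpa using fact_single r i 1
        have := fact_add r (r ^ i) _ _ _ h0 hα
        rw [Fin.sum_univ_succ, hi]
        exact this
      · rw [flen_add, flen_single, hlen]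
        omega

lemma fact_to_atoms (h1 : 1 < r) (hd : r.den ≠ 1) :
    ∀ (t : ℕ) (α : ℕ →₀ ℕ) (x : ℚ), IsFactorization r x α → flen α = t →
      ∃ f : Fin t → ℚ, (∀ i, IsAtomS r (f i)) ∧ ∑ i, f i = x := by
  intro t
  induction t with
  | zero =>
      intro α x hα hlen
      have hα0 : α = 0 := (flen_zero_iff α).1 hlen
      subst hα0
      simp [IsFactorization] at hα
      exact ⟨fun i => i.elim0, fun i => i.elim0, by simp [← hα]⟩
  | succ t ih =>
      intro α x hα hlen
      have hne : α.support.Nonempty := by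
        rw [Finset.nonempty_iff_ne_empty]
        intro h
        have : flen α = 0 := by rw [flen_eq, h]; rfl
        omega
      obtain ⟨i, hi⟩ := hne
      have hi1 : 1 ≤ α i := Nat.pos_of_ne_zero (Finsupp.mem_support_iff.1 hi)
      obtain ⟨hβ, hlen'⟩ := fact_sub r i x α hi1 hα
      obtain ⟨g, hg, hgsum⟩ := ih (α - Finsupp.single i 1) (x - r ^ i) hβ (by omega)
      refine ⟨Fin.cons (r ^ i) g, ?_, ?_⟩
      · intro j
        refine Fin.cases ?_ ?_ j
        · rw [Fin.cons_zero]
          exact (atom_iff r h1 hd _).2 ⟨i, rfl⟩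
        · intro k
          rw [Fin.cons_succ]
          exact hg k
      · rw [Fin.sum_cons, hgsum]
        ring

lemma atomLengthSet_eq (h1 : 1 < r) (hd : r.den ≠ 1) (x : ℚ) :
    atomLengthSet r x = lengthSet r x := by
  ext t
  constructor
  · rintro ⟨f, hf, hsum⟩
    obtain ⟨α, hα, hlen⟩ := atoms_to_fact r h1 hd t f hf
    exact ⟨α, by rwa [hsum] at hα, hlen⟩
  · rintro ⟨α, hα, hlen⟩
    obtain ⟨f, hf, hsum⟩ := fact_to_atoms r h1 hd t α x hα hlen
    exact ⟨f, hf, hsum⟩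
end

section
variable (r : ℚ)

lemma geo_bound (s : ℚ) (hs : 2 ≤ s) :
    ∀ P : ℕ, ∑ j ∈ Finset.range P, s ^ (j + 1) ≤ 2 * s ^ P - 2 := by
  intro P
  induction P with
  | zero => simp
  | succ P ih =>
      rw [Finset.sum_range_succ]
      have hsp : (0:ℚ) ≤ s ^ P := by positivity
      have h2 : 2 * s ^ P ≤ s * s ^ P := by nlinarith
      have : s ^ (P + 1) = s * s ^ P := by ring
      nlinarith [pow_nonneg (by linarith : (0:ℚ) ≤ s) P]

/-- The element `q + ∑_{j=1}^{P} r^(A j)` of `S r`. -/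
noncomputable def chainElt (q A P : ℕ) : ℚ :=
  (q : ℚ) + ∑ j ∈ Finset.range P, r ^ (A * (j + 1))

lemma chain (h1 : 1 < r) (hd : r.den ≠ 1) (q A : ℕ)
    (h2A : (2:ℚ) ≤ r ^ A) (hqA : (q:ℚ) < r ^ A) :
    ∀ P : ℕ, lengthSet r (chainElt r q A P) = (fun t => t + P) '' lengthSet r q := by
  have hr1 : (1:ℚ) ≤ r := le_of_lt h1
  have hrpos := hr0 r h1
  set n := r.num.natAbs with hn
  set d := r.den with hdd
  have hd2 : 2 ≤ d := by have := r.pos; omega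
  have hA1 : 1 ≤ A := by
    by_contra h
    push_neg at h
    interval_cases A
    norm_num at h2A
  intro P
  induction P with
  | zero =>
      simp [chainElt]
  | succ P ih =>
      set K := A * (P + 1) with hK
      have hK1 : 1 ≤ K := by
        have : 1 * 1 ≤ A * (P + 1) := Nat.mul_le_mul hA1 (by omega)
        omega
      have hAK : A ≤ K := by
        have : A * 1 ≤ A * (P + 1) := Nat.mul_le_mul_left A (by omega)
        omega
      have hrAK : r ^ A ≤ r ^ K := pow_le_pow_right₀ hr1 hAK
      have hsum_pow : ∀ j, r ^ (A * (j+1)) = (r ^ A) ^ (j + 1) := by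
        intro j; rw [← pow_mul]
      have hrK : r ^ K = (r ^ A) ^ (P + 1) := by rw [← pow_mul]
      -- size bound
      have hbig : chainElt r q A (P+1) < ((d:ℚ) + 1) * r ^ K := by
        unfold chainElt
        have hgeo := geo_bound (r ^ A) h2A (P+1)
        have : ∑ j ∈ Finset.range (P+1), r ^ (A * (j+1))
            = ∑ j ∈ Finset.range (P+1), (r ^ A) ^ (j+1) :=
          Finset.sum_congr rfl fun j _ => hsum_pow j
        rw [this]
        have h3 : ((3:ℚ)) * r ^ K ≤ ((d:ℚ) + 1) * r ^ K := by
          have : (3:ℚ) ≤ (d:ℚ) + 1 := by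
            have : (2:ℚ) ≤ (d:ℚ) := by exact_mod_cast hd2
            linarith
          have : (0:ℚ) < r ^ K := by positivity
          nlinarith
        have hq3 : (q:ℚ) < r ^ K := lt_of_lt_of_le hqA hrAK
        rw [hrK] at h3 hq3 ⊢
        nlinarith
      -- the integer N
      set M : ℕ := q * d ^ K + ∑ j ∈ Finset.range P, n ^ (A * (j+1)) * d ^ (K - A * (j+1))
        with hM
      have hdvdM : d ∣ M := by
        refine Nat.dvd_add (Dvd.dvd.mul_left (dvd_pow_self d (by omega)) q) ?_
        refine Finset.dvd_sum fun j hj => ?_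
        have hjP : j + 1 ≤ P := Nat.succ_le_of_lt (Finset.mem_range.1 hj)
        have h2 : A * (j + 2) ≤ A * (P + 1) := Nat.mul_le_mul_left A (by omega)
        have h3 : A * (j + 2) = A * (j + 1) + A := by ring
        have : A * (j + 1) + A ≤ K := by rw [hK]; omega
        exact Dvd.dvd.mul_left (dvd_pow_self d (by omega)) _
      have hNd : ¬ d ∣ (M + n ^ K) := by
        intro h
        have hdn : d ∣ n ^ K := (Nat.dvd_add_right hdvdM).1 h
        have hcop : d.Coprime (n ^ K) := (r.reduced.symm).pow_right K
        exact hd (Nat.Coprime.eq_one_of_dvd hcop hdn)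
      have hx : chainElt r q A (P+1) * (d:ℚ) ^ K = ((M + n ^ K : ℕ) : ℚ) := by
        unfold chainElt
        rw [Finset.sum_range_succ]
        push_cast [hM]
        rw [add_mul, add_mul]
        have hterm : ∀ j, j < P → r ^ (A * (j+1)) * (d:ℚ) ^ K
            = (n:ℚ) ^ (A * (j+1)) * (d:ℚ) ^ (K - A * (j+1)) := by
          intro j hj
          have hle : A * (j+1) ≤ K := by
            have := Nat.mul_le_mul_left A (by omega : j + 1 ≤ P + 1)
            omega
          have : (d:ℚ) ^ K = (d:ℚ) ^ (A * (j+1)) * (d:ℚ) ^ (K - A * (j+1)) := by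
            rw [← pow_add]; congr 1; omega
          rw [this, ← mul_assoc]
          have hp := pow_eq r h1 (A * (j+1))
          rw [mul_comm (r ^ (A * (j+1))) ((d:ℚ) ^ (A * (j+1))), hp]
        have hsum : (∑ j ∈ Finset.range P, r ^ (A * (j+1))) * (d:ℚ) ^ K
            = ∑ j ∈ Finset.range P, (n:ℚ) ^ (A * (j+1)) * (d:ℚ) ^ (K - A * (j+1)) := by
          rw [Finset.sum_mul]
          exact Finset.sum_congr rfl fun j hj => hterm j (Finset.mem_range.1 hj)
        rw [hsum]
        have hlast : r ^ K * (d:ℚ) ^ K = (n:ℚ) ^ K := by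
          rw [mul_comm]; exact pow_eq r h1 K
        rw [hlast]
        push_cast
        ring
      -- x_{P+1} = x_P + r^K
      have hstep : chainElt r q A (P+1) = chainElt r q A P + r ^ K := by
        unfold chainElt
        rw [Finset.sum_range_succ]
        ring
      ext t
      constructor
      · rintro ⟨α, hα, hlen⟩
        have hforce : 1 ≤ α K :=
          force r h1 hd K hK1 (M + n ^ K) hNd _ hx hbig α hα
        obtain ⟨hβ, hlen'⟩ := fact_sub r K _ α hforce hα
        have hβ' : IsFactorization r (chainElt r q A P) (α - Finsupp.single K 1) := by
          rwa [hstep, add_sub_cancel_right] at hβ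
        have : flen (α - Finsupp.single K 1) ∈ lengthSet r (chainElt r q A P) :=
          ⟨_, hβ', rfl⟩
        rw [ih] at this
        obtain ⟨u, hu, huv⟩ := this
        have huv' : u + P = flen (α - Finsupp.single K 1) := huv
        exact ⟨u, hu, show u + (P+1) = t by omega⟩
      · rintro ⟨u, hu, huv⟩
        have : u + P ∈ lengthSet r (chainElt r q A P) := by
          rw [ih]; exact ⟨u, hu, rfl⟩
        obtain ⟨β, hβ, hlenβ⟩ := this
        refine ⟨β + Finsupp.single K 1, ?_, ?_⟩
        · have h0 : IsFactorization r (r ^ K) (Finsupp.single K 1) := by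
            simpa using fact_single r K 1
          have := fact_add r _ _ _ _ hβ h0
          rwa [← hstep] at this
        · rw [flen_add, flen_single]
          have huv' : u + (P + 1) = t := huv
          omega
end

section
variable (r : ℚ)

lemma q_mem_lengthSet (q : ℕ) : q ∈ lengthSet r (q : ℚ) :=
  ⟨Finsupp.single 0 q, by simpa using fact_single r 0 q, flen_single 0 q⟩

lemma lengthSet_le (h1 : 1 < r) (x : ℚ) (t : ℕ) (ht : t ∈ lengthSet r x) :
    (t : ℚ) ≤ x := by
  obtain ⟨α, hα, hlen⟩ := ht
  rw [← hlen, ← hα]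
  exact flen_le_val r (le_of_lt h1) α

lemma dk_mem_lengthSet (h1 : 1 < r) (k : ℕ) :
    r.den ^ k ∈ lengthSet r ((r.num.natAbs ^ k : ℕ) : ℚ) := by
  refine ⟨Finsupp.single k (r.den ^ k), ?_, flen_single _ _⟩
  have := fact_single r k (r.den ^ k)
  have hp : ((r.den ^ k : ℕ) : ℚ) * r ^ k = ((r.num.natAbs ^ k : ℕ) : ℚ) := by
    push_cast
    exact pow_eq r h1 k
  rwa [hp] at this

lemma zero_not_mem_lengthSet (x : ℚ) (hx : x ≠ 0) : 0 ∉ lengthSet r x := by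
  rintro ⟨α, hα, hlen⟩
  rw [(flen_zero_iff α).1 hlen] at hα
  simp [IsFactorization] at hα
  exact hx hα.symm

lemma elast_chain (h1 : 1 < r) (hd : r.den ≠ 1) (k A P : ℕ)
    (h2A : (2:ℚ) ≤ r ^ A) (hqA : ((r.num.natAbs ^ k : ℕ) : ℚ) < r ^ A) :
    chainElt r (r.num.natAbs ^ k) A P ∈ S r ∧ chainElt r (r.num.natAbs ^ k) A P ≠ 0 ∧
    elast r (chainElt r (r.num.natAbs ^ k) A P)
      = ENNReal.ofReal (((r.num.natAbs ^ k + P : ℕ) : ℝ) /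
          ((sInf (lengthSet r ((r.num.natAbs ^ k : ℕ) : ℚ)) + P : ℕ) : ℝ)) := by
  have hrpos := hr0 r h1
  set q : ℕ := r.num.natAbs ^ k with hq
  set L₀ := lengthSet r ((q : ℕ) : ℚ) with hL₀
  set m := sInf L₀ with hm
  have hne : L₀.Nonempty := ⟨q, q_mem_lengthSet r q⟩
  have hq1 : 1 ≤ q := by
    have : 1 ≤ r.num.natAbs := by
      have := den_lt_num r h1
      have := r.pos
      omega
    exact Nat.one_le_pow _ _ (by omega)
  have hq0 : ((q:ℕ):ℚ) ≠ 0 := by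
    exact_mod_cast Nat.one_le_iff_ne_zero.1 hq1
  have hbound : ∀ t ∈ L₀, t ≤ q := by
    intro t ht
    have := lengthSet_le r h1 _ t ht
    exact_mod_cast this
  have hmem : m ∈ L₀ := Nat.sInf_mem hne
  have hm1 : 1 ≤ m := by
    rcases Nat.eq_zero_or_pos m with h | h
    · exact absurd (h ▸ hmem) (zero_not_mem_lengthSet r _ hq0)
    · exact h
  set x := chainElt r q A P with hx
  have hLx : lengthSet r x = (fun t => t + P) '' L₀ :=
    chain r h1 hd q A h2A hqA P
  have hsum_nonneg : (0:ℚ) ≤ ∑ j ∈ Finset.range P, r ^ (A * (j + 1)) :=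
    Finset.sum_nonneg fun j _ => by positivity
  have hxpos : (0:ℚ) < x := by
    rw [hx]
    unfold chainElt
    have : (0:ℚ) < (q:ℚ) := by exact_mod_cast hq1
    linarith
  have hx0 : x ≠ 0 := ne_of_gt hxpos
  have hxS : x ∈ S r := by
    rw [hx]
    unfold chainElt
    refine AddSubmonoid.add_mem _ ?_ (AddSubmonoid.sum_mem _ fun j _ => pow_mem_S r _)
    have := AddSubmonoid.nsmul_mem (S r) (pow_mem_S r 0) q
    simpa [nsmul_eq_mul] using this
  have hAeq : atomLengthSet r x = lengthSet r x := atomLengthSet_eq r h1 hd x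
  have hBdd : BddAbove (lengthSet r x) := by
    refine ⟨q + P, ?_⟩
    rintro t ht
    rw [hLx] at ht
    obtain ⟨u, hu, rfl⟩ := ht
    exact add_le_add_left (hbound u hu) P
  have hSup : sSup (lengthSet r x) = q + P := by
    apply le_antisymm
    · refine csSup_le ⟨q + P, ?_⟩ ?_
      · rw [hLx]; exact ⟨q, q_mem_lengthSet r q, rfl⟩
      · rintro t ht
        rw [hLx] at ht
        obtain ⟨u, hu, rfl⟩ := ht
        exact add_le_add_left (hbound u hu) P
    · refine le_csSup hBdd ?_
      rw [hLx]; exact ⟨q, q_mem_lengthSet r q, rfl⟩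
  have hInf : sInf (lengthSet r x) = m + P := by
    apply le_antisymm
    · refine Nat.sInf_le ?_
      rw [hLx]; exact ⟨m, hmem, rfl⟩
    · refine le_csInf ⟨q + P, by rw [hLx]; exact ⟨q, q_mem_lengthSet r q, rfl⟩⟩ ?_
      rintro b hb
      rw [hLx] at hb
      obtain ⟨u, hu, rfl⟩ := hb
      exact add_le_add_left (Nat.sInf_le hu) P
  refine ⟨hxS, hx0, ?_⟩
  unfold elast
  rw [if_neg hx0, if_pos (hAeq ▸ hBdd), hAeq, hSup, hInf]
  have hpos : (0:ℝ) < ((m + P : ℕ) : ℝ) := by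
    have : 1 ≤ m + P := by omega
    exact_mod_cast Nat.lt_of_lt_of_le Nat.zero_lt_one this
  rw [ENNReal.ofReal_div_of_pos hpos, ENNReal.ofReal_natCast, ENNReal.ofReal_natCast]
end

set_option maxHeartbeats 1000000 in
theorem stmt9 (r : ℚ) (h1 : 1 < r) (hd : r.den ≠ 1) :
    Set.Ici (1 : ℝ) ⊆
      closure {y : ℝ | ∃ x ∈ S r, x ≠ 0 ∧ elast r x = ENNReal.ofReal y} := by
  intro y hy
  rw [Set.mem_Ici] at hy
  rw [Metric.mem_closure_iff]
  intro ε hε0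
  set n : ℕ := r.num.natAbs with hn
  set d : ℕ := r.den with hdd
  have hdn : d < n := den_lt_num r h1
  have hd1 : 1 ≤ d := r.pos
  have hdR : (0:ℝ) < (d:ℝ) := by exact_mod_cast hd1
  have hnd1 : (1:ℝ) < (n:ℝ)/(d:ℝ) := by
    rw [lt_div_iff₀ hdR, one_mul]
    exact_mod_cast hdn
  -- choose k
  obtain ⟨k, hk⟩ := pow_unbounded_of_one_lt (max y ((y+ε)^2/ε)) hnd1
  have hdk0 : (0:ℝ) < (d:ℝ)^k := by positivity
  have hdk1 : (1:ℝ) ≤ (d:ℝ)^k := one_le_pow₀ (by exact_mod_cast hd1)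
  have hpow : ((n:ℝ)/(d:ℝ))^k = (n:ℝ)^k/(d:ℝ)^k := div_pow _ _ _
  have hyk : y * (d:ℝ)^k < (n:ℝ)^k := by
    have h2 : y < (n:ℝ)^k/(d:ℝ)^k := lt_of_le_of_lt (le_max_left _ _) (hpow ▸ hk)
    rwa [lt_div_iff₀ hdk0] at h2
  have hBk : (y+ε)^2/ε < (n:ℝ)^k := by
    have h2 : (y+ε)^2/ε < (n:ℝ)^k/(d:ℝ)^k := lt_of_le_of_lt (le_max_right _ _) (hpow ▸ hk)
    have h3 : (n:ℝ)^k/(d:ℝ)^k ≤ (n:ℝ)^k := by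
      rw [div_le_iff₀ hdk0]
      nlinarith [pow_pos (show (0:ℝ) < (n:ℝ) by exact_mod_cast (by omega : 0 < n)) k]
    linarith
  set q : ℕ := n ^ k with hq
  have hqR : ((q:ℕ):ℝ) = (n:ℝ)^k := by rw [hq]; push_cast; ring
  -- choose A
  obtain ⟨A, hA⟩ := pow_unbounded_of_one_lt (max 2 ((q:ℕ):ℚ)) h1
  have h2A : (2:ℚ) ≤ r ^ A := le_of_lt (lt_of_le_of_lt (le_max_left _ _) hA)
  have hqA : ((q:ℕ):ℚ) < r ^ A := lt_of_le_of_lt (le_max_right _ _) hA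
  -- the minimum length m
  set m : ℕ := sInf (lengthSet r ((q:ℕ):ℚ)) with hm
  have hq1 : 1 ≤ q := by rw [hq]; exact Nat.one_le_pow _ _ (by omega)
  have hq0 : ((q:ℕ):ℚ) ≠ 0 := by exact_mod_cast Nat.one_le_iff_ne_zero.1 hq1
  have hm1 : 1 ≤ m := by
    rcases Nat.eq_zero_or_pos m with h | h
    · exfalso
      have hmem : m ∈ lengthSet r ((q:ℕ):ℚ) :=
        Nat.sInf_mem ⟨q, q_mem_lengthSet r q⟩
      exact zero_not_mem_lengthSet r _ hq0 (h ▸ hmem)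
    · exact h
  have hmd : m ≤ d ^ k := Nat.sInf_le (dk_mem_lengthSet r h1 k)
  -- real facts
  have hM1 : (1:ℝ) ≤ (m:ℝ) := by exact_mod_cast hm1
  have hMq : y * (m:ℝ) ≤ (q:ℝ) := by
    have h2 : (m:ℝ) ≤ (d:ℝ)^k := by exact_mod_cast hmd
    have h3 : y * (m:ℝ) ≤ y * (d:ℝ)^k := by nlinarith
    rw [hqR]
    linarith
  set f : ℕ → ℝ := fun P => ((q + P : ℕ) : ℝ) / ((m + P : ℕ) : ℝ) with hf
  have hfeq : ∀ P : ℕ, f P = ((q:ℝ) + P) / ((m:ℝ) + P) := by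
    intro P
    rw [hf]
    push_cast
    ring_nf
  have hfmem : ∀ P : ℕ,
      f P ∈ {y : ℝ | ∃ x ∈ S r, x ≠ 0 ∧ elast r x = ENNReal.ofReal y} := by
    intro P
    obtain ⟨hS, h0, he⟩ := elast_chain r h1 hd k A P h2A hqA
    exact ⟨chainElt r (r.num.natAbs ^ k) A P, hS, h0, he⟩
  have hQ1 : (1:ℝ) ≤ (q:ℝ) := by exact_mod_cast hq1
  have hQB : (y+ε)^2 < ε * (q:ℝ) := by
    rw [div_lt_iff₀ hε0] at hBk
    rw [hqR]
    linarith [mul_comm ε ((n:ℝ)^k)]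
  -- existence of some P with f P < y + ε
  obtain ⟨P₀, hP₀⟩ := exists_nat_gt ((q:ℝ)/ε)
  have hP₀' : (q:ℝ) < ε * P₀ := by
    rw [div_lt_iff₀ hε0] at hP₀
    linarith [mul_comm ε (P₀:ℝ)]
  have hex : ∃ P, f P < y + ε := by
    refine ⟨P₀, ?_⟩
    rw [hfeq]
    have hpos : (0:ℝ) < (m:ℝ) + P₀ := by
      have : (0:ℝ) ≤ (P₀:ℝ) := Nat.cast_nonneg _
      linarith
    rw [div_lt_iff₀ hpos]
    nlinarith [Nat.cast_nonneg (α := ℝ) P₀]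
  classical
  have hPspec : f (Nat.find hex) < y + ε := Nat.find_spec hex
  have hlow : y - ε < f (Nat.find hex) := by
    rcases Nat.eq_zero_or_pos (Nat.find hex) with h0 | hpos
    · rw [h0]
      have hy0 : y ≤ f 0 := by
        rw [hfeq]
        have hMpos : (0:ℝ) < (m:ℝ) + ((0:ℕ):ℝ) := by push_cast; linarith
        rw [le_div_iff₀ hMpos]
        push_cast
        linarith
      linarith
    · obtain ⟨P, hP⟩ : ∃ P, Nat.find hex = P + 1 := ⟨Nat.find hex - 1, by omega⟩
      have hprev : ¬ f P < y + ε := Nat.find_min hex (by omega)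
      push_neg at hprev
      have ha1 : (1:ℝ) ≤ (m:ℝ) + P := by
        have : (0:ℝ) ≤ (P:ℝ) := Nat.cast_nonneg _
        linarith
      have hapos : (0:ℝ) < (m:ℝ) + P := by linarith
      have ha1pos : (0:ℝ) < (m:ℝ) + P + 1 := by linarith
      have hprev' : (y + ε) * ((m:ℝ) + P) ≤ (q:ℝ) + P := by
        rw [hfeq, le_div_iff₀ hapos] at hprev
        linarith
      have hnext : (q:ℝ) + P + 1 < (y + ε) * ((m:ℝ) + P + 1) := by
        have h9 := hPspec
        rw [hP, hfeq] at h9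
        rw [show ((P+1:ℕ):ℝ) = (P:ℝ) + 1 by push_cast; ring] at h9
        rw [div_lt_iff₀ (by linarith : (0:ℝ) < (m:ℝ) + ((P:ℝ)+1))] at h9
        linarith
      have hyε : (0:ℝ) < y + ε := by linarith
      have h5 : (q:ℝ) < (y + ε) * ((m:ℝ) + P + 1) := by
        have : (0:ℝ) ≤ (P:ℝ) := Nat.cast_nonneg _
        linarith
      have h8 : y + ε < ε * ((m:ℝ) + P + 1) := by
        have h6 : ε * (q:ℝ) < ε * ((y + ε) * ((m:ℝ) + P + 1)) := by nlinarith
        have h7 : (y + ε) * (y + ε) < (y + ε) * (ε * ((m:ℝ) + P + 1)) := by nlinarith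
        exact lt_of_mul_lt_mul_left h7 (le_of_lt hyε)
      have hgoal : (y - ε) * ((m:ℝ) + P + 1) < (q:ℝ) + P + 1 := by nlinarith
      rw [hP, hfeq, show ((P+1:ℕ):ℝ) = (P:ℝ) + 1 by push_cast; ring]
      rw [lt_div_iff₀ (by linarith : (0:ℝ) < (m:ℝ) + ((P:ℝ)+1))]
      linarith
  refine ⟨f (Nat.find hex), hfmem (Nat.find hex), ?_⟩
  rw [Real.dist_eq, abs_lt]
  constructor <;> linarith
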